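/- With notation as in the previous statement, the intersection Ω_λ(L) ∩ U^λ corresponds, under the chart A ↦ Im(M_A), exactly to the set of matrices A ∈ M_{c×d} whose entries in positions (j, i) with j > c - λᵢ (i.e. the entries inside the rotated Young diagram λ^rot) vanish. In particular Ω_λ(L) ∩ U^λ is a linear subspace of the chart of codimension |λ| = λ₁ + ⋯ + λ_d, so Ω_λ(L) has codimension |λ| in G_d(E). -/

import Mathlib

/-- Number of identity rows inserted at or before (1-indexed) row `r` of `M_A`. -/
def numIns (c d : ℕ) (lam : ℕ → ℕ) (r : ℕ) : ℕ :=
  ((Finset.Icc 1 d).filter (fun i => c + i - lam i ≤ r)).card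

/-- The interleaved matrix `M_A` (1-indexed entries). -/
def interleaved (c d : ℕ) (lam : ℕ → ℕ) (A : ℕ → ℕ → ℂ) (r j : ℕ) : ℂ :=
  if r ∈ (Finset.Icc 1 d).image (fun i => c + i - lam i) then
    (if r = c + j - lam j then 1 else 0)
  else A (r - numIns c d lam r) j

/-- The column span `P = Im M_A ⊆ ℂ^N`. -/
noncomputable def colSpan (N c d : ℕ) (lam : ℕ → ℕ) (A : ℕ → ℕ → ℂ) :
    Submodule ℂ (Fin N → ℂ) :=
  Submodule.span ℂ
    ((fun j => fun r : Fin N => interleaved c d lam A ((r : ℕ) + 1) j) ''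
      {j | 1 ≤ j ∧ j ≤ d})

/-- The standard flag `L_k = span(e₁, …, e_k)` of `ℂ^N`. -/
noncomputable def stdFlag (N k : ℕ) : Submodule ℂ (Fin N → ℂ) :=
  Submodule.span ℂ ((fun r : Fin N => (Pi.single r 1 : Fin N → ℂ)) '' {r | (r : ℕ) + 1 ≤ k})

/-! ### Auxiliary lemmas -/

lemma mem_stdFlag {N k : ℕ} {v : Fin N → ℂ} :
    v ∈ stdFlag N k ↔ ∀ r : Fin N, k ≤ (r : ℕ) → v r = 0 := by
  constructor
  · intro hv
    refine Submodule.span_induction (fun w hw => ?_) (by simp) (fun a b _ _ ha hb r hr => by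
      simp [ha r hr, hb r hr]) (fun a w _ hw r hr => by simp [hw r hr]) hv
    · rintro r hr
      obtain ⟨s, hs, rfl⟩ := hw
      have : r ≠ s := by rintro rfl; simp only [Set.mem_setOf_eq] at hs; omega
      exact Pi.single_eq_of_ne this 1
  · intro hv
    have : v = ∑ r : Fin N, v r • (Pi.single r 1 : Fin N → ℂ) := by
      ext s; simp [Finset.sum_apply, Pi.single_apply]
    rw [this]
    refine Submodule.sum_mem _ (fun r _ => ?_)
    by_cases hr : (r : ℕ) + 1 ≤ k
    · exact Submodule.smul_mem _ _ (Submodule.subset_span ⟨r, hr, rfl⟩)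
    · have : v r = 0 := hv r (by omega)
      simp [this]

lemma finrank_stdFlag {N k : ℕ} (hk : k ≤ N) :
    Module.finrank ℂ (stdFlag N k) = k := by
  have hli : LinearIndependent ℂ (fun m : Fin k => (Pi.single (Fin.castLE hk m) 1 : Fin N → ℂ)) := by
    have := (Pi.basisFun ℂ (Fin N)).linearIndependent
    have h2 := this.comp (Fin.castLE hk) (Fin.castLE_injective hk)
    convert h2 using 1
    funext m; simp [Function.comp, Pi.basisFun_apply]
  have hset : (fun r : Fin N => (Pi.single r 1 : Fin N → ℂ)) '' {r | (r : ℕ) + 1 ≤ k} =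
      Set.range (fun m : Fin k => (Pi.single (Fin.castLE hk m) 1 : Fin N → ℂ)) := by
    ext v
    constructor
    · rintro ⟨r, hr, rfl⟩
      exact ⟨⟨r, by simpa using hr⟩, by simp [Fin.castLE]⟩
    · rintro ⟨m, rfl⟩
      exact ⟨Fin.castLE hk m, by simp [Fin.castLE], rfl⟩
  rw [stdFlag, hset, finrank_span_eq_card hli, Fintype.card_fin]

/-- The linear map `T : ℂ^d → ℂ^N` whose matrix is `M_A`. -/
noncomputable def Tmap (N c d : ℕ) (lam : ℕ → ℕ) (A : ℕ → ℕ → ℂ) :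
    (Fin d → ℂ) →ₗ[ℂ] (Fin N → ℂ) where
  toFun x := fun r => ∑ m : Fin d, x m * interleaved c d lam A ((r : ℕ) + 1) ((m : ℕ) + 1)
  map_add' x y := by funext r; simp [add_mul, Finset.sum_add_distrib]
  map_smul' a x := by funext r; simp [Finset.mul_sum, mul_assoc]

lemma Tmap_apply (N c d : ℕ) (lam : ℕ → ℕ) (A : ℕ → ℕ → ℂ) (x : Fin d → ℂ) (r : Fin N) :
    Tmap N c d lam A x r = ∑ m : Fin d, x m * interleaved c d lam A ((r : ℕ) + 1) ((m : ℕ) + 1) :=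
  rfl

lemma colSpan_eq_range (N c d : ℕ) (lam : ℕ → ℕ) (A : ℕ → ℕ → ℂ) :
    colSpan N c d lam A = LinearMap.range (Tmap N c d lam A) := by
  apply le_antisymm
  · rw [colSpan, Submodule.span_le]
    rintro v ⟨j, ⟨hj1, hjd⟩, rfl⟩
    refine ⟨Pi.single ⟨j - 1, by omega⟩ 1, ?_⟩
    funext r
    rw [Tmap_apply]
    rw [Finset.sum_eq_single (⟨j - 1, by omega⟩ : Fin d)]
    · simp; congr 1; omega
    · intro m _ hm
      rw [Pi.single_eq_of_ne hm]; ring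
    · simp
  · rintro v ⟨x, rfl⟩
    have : Tmap N c d lam A x = ∑ m : Fin d,
        x m • (fun r : Fin N => interleaved c d lam A ((r : ℕ) + 1) ((m : ℕ) + 1)) := by
      funext r
      rw [Tmap_apply]
      simp [Finset.sum_apply]
    rw [this]
    refine Submodule.sum_mem _ (fun m _ => Submodule.smul_mem _ _ ?_)
    exact Submodule.subset_span ⟨(m : ℕ) + 1, ⟨by omega, by omega⟩, rfl⟩

/-- Number of `A`-rows strictly before position of `A`-row `r`, i.e. identity rows with
`c - λᵢ < r`. -/
def ins (c d : ℕ) (lam : ℕ → ℕ) (r : ℕ) : ℕ :=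
  ((Finset.Icc 1 d).filter (fun i => c - lam i < r)).card

section Aux
variable {N c d : ℕ} {lam : ℕ → ℕ} {A : ℕ → ℕ → ℂ}
  (hlam_anti : ∀ i j, 1 ≤ i → i ≤ j → j ≤ d → lam j ≤ lam i)
  (hlam_le : ∀ i, 1 ≤ i → i ≤ d → lam i ≤ c)
include hlam_anti hlam_le

lemma k_mono : ∀ i j, 1 ≤ i → i ≤ j → j ≤ d → c + i - lam i ≤ c + j - lam j := by
  intro i j h1 h2 h3
  have := hlam_anti i j h1 h2 h3
  have := hlam_le i h1 (le_trans h2 h3)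
  omega

lemma k_strict_mono : ∀ i j, 1 ≤ i → i < j → j ≤ d → c + i - lam i < c + j - lam j := by
  intro i j h1 h2 h3
  have := hlam_anti i j h1 (le_of_lt h2) h3
  have := hlam_le i h1 (by omega)
  have := hlam_le j (by omega) h3
  omega

lemma numIns_ge {i q : ℕ} (h1 : 1 ≤ i) (h2 : i ≤ d) (h3 : c + i - lam i ≤ q) :
    i ≤ numIns c d lam q := by
  have hsub : Finset.Icc 1 i ⊆ (Finset.Icc 1 d).filter (fun i' => c + i' - lam i' ≤ q) := by
    intro i' hi'
    simp only [Finset.mem_Icc] at hi'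
    refine Finset.mem_filter.2 ⟨Finset.mem_Icc.2 ⟨hi'.1, le_trans hi'.2 h2⟩, ?_⟩
    exact le_trans (k_mono hlam_anti hlam_le i' i hi'.1 hi'.2 h2) h3
  have := Finset.card_le_card hsub
  simpa [numIns] using this

omit hlam_anti hlam_le in
lemma numIns_le_d {q : ℕ} : numIns c d lam q ≤ d := by
  have := Finset.card_le_card (Finset.filter_subset (fun i' => c + i' - lam i' ≤ q) (Finset.Icc 1 d))
  simpa [numIns] using this

lemma k_numIns_le {q : ℕ} (h : 1 ≤ numIns c d lam q) :
    c + numIns c d lam q - lam (numIns c d lam q) ≤ q := by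
  by_contra hq
  push_neg at hq
  set n := numIns c d lam q with hn
  have hnd : n ≤ d := numIns_le_d (lam := lam)
  have hsub : (Finset.Icc 1 d).filter (fun i' => c + i' - lam i' ≤ q) ⊆ Finset.Icc 1 (n - 1) := by
    intro i' hi'
    simp only [Finset.mem_filter, Finset.mem_Icc] at hi'
    obtain ⟨⟨hi1, hi2⟩, hi3⟩ := hi'
    refine Finset.mem_Icc.2 ⟨hi1, ?_⟩
    by_contra hc
    push_neg at hc
    have : n ≤ i' := by omega
    exact absurd (le_trans (k_mono hlam_anti hlam_le n i' (by omega) this hi2) hi3) (by omega)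
  have := Finset.card_le_card hsub
  simp only [numIns] at hn
  rw [← hn, Nat.card_Icc] at this
  omega

lemma q_lt_k_succ {q : ℕ} (h : numIns c d lam q < d) :
    q < c + (numIns c d lam q + 1) - lam (numIns c d lam q + 1) := by
  by_contra hq
  push_neg at hq
  have := numIns_ge hlam_anti hlam_le (i := numIns c d lam q + 1) (by omega) (by omega) hq
  omega

omit hlam_anti hlam_le in
lemma ins_le_d {r : ℕ} : ins c d lam r ≤ d := by
  have := Finset.card_le_card (Finset.filter_subset (fun i => c - lam i < r) (Finset.Icc 1 d))
  simpa [ins] using this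

/-- key pointwise fact for `q = r + ins r`, the position of `A`-row `r` in `M_A`. -/
lemma pos_facts {r : ℕ} (hr1 : 1 ≤ r) (hrc : r ≤ c) :
    ∀ i, 1 ≤ i → i ≤ d →
      ((c + i - lam i ≤ r + ins c d lam r ↔ c - lam i < r) ∧
        r + ins c d lam r ≠ c + i - lam i) := by
  intro i h1 h2
  have hlic := hlam_le i h1 h2
  by_cases hcase : c - lam i < r
  · have hge : i ≤ ins c d lam r := by
      have hsub : Finset.Icc 1 i ⊆ (Finset.Icc 1 d).filter (fun i' => c - lam i' < r) := by
        intro i' hi'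
        simp only [Finset.mem_Icc] at hi'
        refine Finset.mem_filter.2 ⟨Finset.mem_Icc.2 ⟨hi'.1, le_trans hi'.2 h2⟩, ?_⟩
        have := hlam_anti i' i hi'.1 hi'.2 h2
        omega
      have := Finset.card_le_card hsub
      simpa [ins] using this
    exact ⟨⟨fun _ => hcase, fun _ => by omega⟩, by omega⟩
  · push_neg at hcase
    have hle : ins c d lam r ≤ i - 1 := by
      have hsub : (Finset.Icc 1 d).filter (fun i' => c - lam i' < r) ⊆ Finset.Icc 1 (i - 1) := by
        intro i' hi'
        simp only [Finset.mem_filter, Finset.mem_Icc] at hi'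
        obtain ⟨⟨hi1, hi2⟩, hi3⟩ := hi'
        refine Finset.mem_Icc.2 ⟨hi1, ?_⟩
        by_contra hc
        push_neg at hc
        have : i ≤ i' := by omega
        have := hlam_anti i i' h1 this hi2
        omega
      have := Finset.card_le_card hsub
      simp only [ins]
      rw [Nat.card_Icc] at this
      omega
    exact ⟨⟨fun h => by omega, fun h => by omega⟩, by omega⟩

/-- evaluation of `T x` at an identity row -/
lemma Tmap_id_row {j : ℕ} (hj1 : 1 ≤ j) (hjd : j ≤ d) (x : Fin d → ℂ) (p : Fin N)
    (hp : (p : ℕ) + 1 = c + j - lam j) :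
    Tmap N c d lam A x p = x ⟨j - 1, by omega⟩ := by
  have hmem : (p : ℕ) + 1 ∈ (Finset.Icc 1 d).image (fun i => c + i - lam i) :=
    Finset.mem_image.2 ⟨j, Finset.mem_Icc.2 ⟨hj1, hjd⟩, hp.symm⟩
  rw [Tmap_apply]
  have hjm : ((⟨j - 1, by omega⟩ : Fin d) : ℕ) + 1 = j := by simp; omega
  rw [Finset.sum_eq_single (⟨j - 1, by omega⟩ : Fin d)]
  · rw [interleaved, if_pos hmem, if_pos (by rw [hjm, hp]), mul_one]
  · intro m _ hm
    rw [interleaved, if_pos hmem, if_neg, mul_zero]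
    rw [hp]
    intro hkeq
    have h1 : 1 ≤ (m : ℕ) + 1 := by omega
    have h2 : (m : ℕ) + 1 ≤ d := by omega
    rcases lt_trichotomy j ((m : ℕ) + 1) with h | h | h
    · have := k_strict_mono hlam_anti hlam_le j ((m : ℕ) + 1) hj1 h h2
      omega
    · exact hm (by apply Fin.ext; simp; omega)
    · have := k_strict_mono hlam_anti hlam_le ((m : ℕ) + 1) j h1 h hjd
      omega
  · simp

lemma Tmap_injective (hN : N = c + d) : Function.Injective (Tmap N c d lam A) := by
  rw [injective_iff_map_eq_zero]
  intro x hx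
  funext m
  have hj1 : 1 ≤ (m : ℕ) + 1 := by omega
  have hjd : (m : ℕ) + 1 ≤ d := by omega
  have hkle : c + ((m : ℕ) + 1) - lam ((m : ℕ) + 1) ≤ N := by
    have := hlam_le ((m : ℕ) + 1) hj1 hjd
    omega
  have hkge : 1 ≤ c + ((m : ℕ) + 1) - lam ((m : ℕ) + 1) := by
    have := hlam_le ((m : ℕ) + 1) hj1 hjd
    omega
  set p : Fin N := ⟨c + ((m : ℕ) + 1) - lam ((m : ℕ) + 1) - 1, by omega⟩ with hpdef
  have hp : (p : ℕ) + 1 = c + ((m : ℕ) + 1) - lam ((m : ℕ) + 1) := by simp [hpdef]; omega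
  have := Tmap_id_row (A := A) hlam_anti hlam_le hj1 hjd x p hp
  rw [hx] at this
  have hm : (⟨(m : ℕ) + 1 - 1, by omega⟩ : Fin d) = m := by apply Fin.ext; simp
  rw [hm] at this
  rw [Pi.zero_apply] at this
  exact this.symm

end Aux

theorem stmt_15 (N c d : ℕ) (hN : N = c + d)
    (lam : ℕ → ℕ) (hlam_anti : ∀ i j, 1 ≤ i → i ≤ j → j ≤ d → lam j ≤ lam i)
    (hlam_le : ∀ i, 1 ≤ i → i ≤ d → lam i ≤ c)
    (A : ℕ → ℕ → ℂ) :
    ((∀ i, 1 ≤ i → i ≤ d →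
        i ≤ Module.finrank ℂ ↥(colSpan N c d lam A ⊓ stdFlag N (c + i - lam i))) ↔
      (∀ j r, 1 ≤ j → j ≤ d → c - lam j < r → r ≤ c → A r j = 0)) ∧
    (((Finset.Icc 1 c) ×ˢ (Finset.Icc 1 d)).filter
        (fun p => c - lam p.2 < p.1)).card = ∑ i ∈ Finset.Icc 1 d, lam i := by
  constructor
  · -- the chart description of the Schubert variety
    have hfin : ∀ k' : ℕ, Module.finrank ℂ ↥(colSpan N c d lam A ⊓ stdFlag N k') =
        Module.finrank ℂ ↥(Submodule.comap (Tmap N c d lam A) (stdFlag N k')) := by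
      intro k'
      rw [colSpan_eq_range, ← Submodule.map_comap_eq]
      exact ((Submodule.equivMapOfInjective _
        (Tmap_injective hlam_anti hlam_le hN) _).finrank_eq).symm
    constructor
    · -- forward direction
      intro H j r hj1 hjd hr1 hr2
      by_contra hA
      have hWle : j ≤ Module.finrank ℂ
          ↥(Submodule.comap (Tmap N c d lam A) (stdFlag N (c + j - lam j))) := by
        rw [← hfin]; exact H j hj1 hjd
      -- the linear functional given by row r of A
      set ℓ : (Fin d → ℂ) →ₗ[ℂ] ℂ :=
        { toFun := fun x => ∑ m : Fin d, x m * A r ((m : ℕ) + 1)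
          map_add' := fun x y => by simp [add_mul, Finset.sum_add_distrib]
          map_smul' := fun a x => by simp [Finset.mul_sum, mul_assoc] } with hldef
      have hU : Submodule.comap (Tmap N c d lam A) (stdFlag N (c + j - lam j)) ≤
          stdFlag d j ⊓ LinearMap.ker ℓ := by
        intro x hx
        rw [Submodule.mem_comap, mem_stdFlag] at hx
        refine Submodule.mem_inf.2 ⟨mem_stdFlag.2 ?_, LinearMap.mem_ker.2 ?_⟩
        · -- vanishing of coordinates ≥ j via pivot rows
          intro m hm
          have h1 : 1 ≤ (m : ℕ) + 1 := by omega
          have h2 : (m : ℕ) + 1 ≤ d := by omega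
          have hlt := k_strict_mono hlam_anti hlam_le j ((m : ℕ) + 1) hj1 (by omega) h2
          have hkle : c + ((m : ℕ) + 1) - lam ((m : ℕ) + 1) ≤ N := by
            have := hlam_le ((m : ℕ) + 1) h1 h2; omega
          have hkge : 1 ≤ c + ((m : ℕ) + 1) - lam ((m : ℕ) + 1) := by omega
          set p : Fin N := ⟨c + ((m : ℕ) + 1) - lam ((m : ℕ) + 1) - 1, by omega⟩ with hpdef
          have hp : (p : ℕ) + 1 = c + ((m : ℕ) + 1) - lam ((m : ℕ) + 1) := by
            simp [hpdef]; omega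
          have hrow := Tmap_id_row (A := A) hlam_anti hlam_le h1 h2 x p hp
          have hzero := hx p (by simp [hpdef]; omega)
          rw [hrow] at hzero
          have : (⟨(m : ℕ) + 1 - 1, by omega⟩ : Fin d) = m := by apply Fin.ext; simp
          rwa [this] at hzero
        · -- the row-r equation
          have hposf := pos_facts hlam_anti hlam_le (r := r) (by omega) hr2
          set q : ℕ := r + ins c d lam r with hqdef
          have hnotmem : q ∉ (Finset.Icc 1 d).image (fun i => c + i - lam i) := by
            intro hmem
            obtain ⟨i', hi', hki'⟩ := Finset.mem_image.1 hmem
            rw [Finset.mem_Icc] at hi'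
            exact (hposf i' hi'.1 hi'.2).2 hki'.symm
          have hnum : numIns c d lam q = ins c d lam r := by
            rw [numIns, ins]
            congr 1
            apply Finset.filter_congr
            intro i hi
            rw [Finset.mem_Icc] at hi
            exact (hposf i hi.1 hi.2).1
          have hkjq : c + j - lam j < q := by
            have h1 := (hposf j hj1 hjd).1.2 (by omega)
            have h2 := (hposf j hj1 hjd).2
            omega
          have hqN : q ≤ N := by
            have := ins_le_d (c := c) (d := d) (lam := lam) (r := r)
            omega
          set p : Fin N := ⟨q - 1, by omega⟩ with hpdef
          have hp1 : (p : ℕ) + 1 = q := by show q - 1 + 1 = q; omega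
          have hzero := hx p (by show c + j - lam j ≤ q - 1; omega)
          rw [Tmap_apply] at hzero
          rw [hldef]
          simp only [LinearMap.coe_mk, AddHom.coe_mk]
          rw [← hzero]
          apply Finset.sum_congr rfl
          intro m _
          congr 1
          rw [hp1, interleaved, if_neg hnotmem, hnum]
          congr 2
          omega
      have hlt : stdFlag d j ⊓ LinearMap.ker ℓ < stdFlag d j := by
        refine lt_of_le_of_ne inf_le_left (fun heq => ?_)
        have hsingle : (Pi.single (⟨j - 1, by omega⟩ : Fin d) 1 : Fin d → ℂ) ∈ stdFlag d j := by
          refine mem_stdFlag.2 (fun m hm => ?_)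
          refine Pi.single_eq_of_ne (fun hc => ?_) 1
          rw [hc] at hm
          simp at hm
          omega
        rw [← heq] at hsingle
        have := (Submodule.mem_inf.1 hsingle).2
        rw [LinearMap.mem_ker, hldef] at this
        simp only [LinearMap.coe_mk, AddHom.coe_mk] at this
        rw [Finset.sum_eq_single (⟨j - 1, by omega⟩ : Fin d)] at this
        · simp at this
          apply hA
          convert this using 2
          omega
        · intro m _ hm
          rw [Pi.single_eq_of_ne hm]; ring
        · simp
      have h1 := Submodule.finrank_lt_finrank_of_lt hlt
      have h2 := Submodule.finrank_mono hU
      rw [finrank_stdFlag hjd] at h1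
      omega
    · -- backward direction
      intro H i hi1 hid
      rw [hfin]
      have hle : stdFlag d i ≤
          Submodule.comap (Tmap N c d lam A) (stdFlag N (c + i - lam i)) := by
        intro x hx
        rw [mem_stdFlag] at hx
        refine Submodule.mem_comap.2 (mem_stdFlag.2 ?_)
        intro p hp
        by_cases hmem : (p : ℕ) + 1 ∈ (Finset.Icc 1 d).image (fun i => c + i - lam i)
        · obtain ⟨i', hi', hki'⟩ := Finset.mem_image.1 hmem
          rw [Finset.mem_Icc] at hi'
          rw [Tmap_id_row (A := A) hlam_anti hlam_le hi'.1 hi'.2 x p hki'.symm]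
          refine hx _ ?_
          simp only
          have : i < i' := by
            by_contra hc
            push_neg at hc
            have := k_mono hlam_anti hlam_le i' i hi'.1 hc hid
            omega
          omega
        · rw [Tmap_apply]
          apply Finset.sum_eq_zero
          intro m _
          by_cases hmi : i ≤ (m : ℕ)
          · rw [hx m hmi]; ring
          · push_neg at hmi
            set q : ℕ := (p : ℕ) + 1 with hqdef
            set n : ℕ := numIns c d lam q with hndef
            have hki : c + i - lam i ≤ q := by omega
            have hni : i ≤ n := numIns_ge hlam_anti hlam_le hi1 hid hki
            have hn1 : 1 ≤ n := by omega
            have hnd : n ≤ d := numIns_le_d (lam := lam)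
            have hkn : c + n - lam n ≤ q := k_numIns_le hlam_anti hlam_le hn1
            have hknne : c + n - lam n ≠ q := by
              intro hc
              exact hmem (Finset.mem_image.2 ⟨n, Finset.mem_Icc.2 ⟨hn1, hnd⟩, hc⟩)
            have hlamn := hlam_le n hn1 hnd
            have hlamanti : lam n ≤ lam ((m : ℕ) + 1) :=
              hlam_anti ((m : ℕ) + 1) n (by omega) (by omega) hnd
            have hrqc : q - n ≤ c := by
              by_cases hcase : n < d
              · have h5 := q_lt_k_succ hlam_anti hlam_le (q := q) hcase
                rw [← hndef] at h5
                have h6 := hlam_le (n + 1) (by omega) (by omega)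
                omega
              · have : q ≤ N := by omega
                omega
            have hArq : A (q - n) ((m : ℕ) + 1) = 0 := by
              apply H ((m : ℕ) + 1) (q - n) (by omega) (by omega) _ hrqc
              omega
            rw [interleaved, if_neg hmem, ← hndef, hArq, mul_zero]
      have := Submodule.finrank_mono hle
      rw [finrank_stdFlag hid] at this
      exact this
  · -- the codimension count
    have hcount : ∀ j, 1 ≤ j → j ≤ d →
        ((Finset.Icc 1 c).filter (fun r => c - lam j < r)).card = lam j := by
      intro j h1 h2
      have heq : (Finset.Icc 1 c).filter (fun r => c - lam j < r) =
          Finset.Ioc (c - lam j) c := by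
        ext r
        simp only [Finset.mem_filter, Finset.mem_Icc, Finset.mem_Ioc]
        omega
      rw [heq, Nat.card_Ioc]
      have := hlam_le j h1 h2
      omega
    rw [Finset.card_filter, Finset.sum_product, Finset.sum_comm]
    apply Finset.sum_congr rfl
    intro j hj
    rw [Finset.mem_Icc] at hj
    rw [← Finset.card_filter, hcount j hj.1 hj.2]
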